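/- For any probability measure μ supported in [−K,K] and any z in a neighborhood of 0, C^{(1)}_μ(z²) = z R_{μ_s}(z), where μ_s is the symmetrization of μ and R denotes the (analytic convention) R-transform. -/

import Mathlib

open MeasureTheory

noncomputable def Mfun (μ : Measure ℝ) (z : ℝ) : ℝ := ∫ t, t ^ 2 * z / (1 - t ^ 2 * z) ∂μ

noncomputable def Tfun (c z : ℝ) : ℝ := (c * z + 1) * (z + 1)

noncomputable def Hfun (c : ℝ) (μ : Measure ℝ) (z : ℝ) : ℝ := z * Tfun c (Mfun μ z)

/-- The symmetrization `μ_s` of `μ`: `μ_s(A) = (μ(A) + μ(-A))/2`. -/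
noncomputable def symmetrization (μ : Measure ℝ) : Measure ℝ :=
  (2 : ENNReal)⁻¹ • μ + (2 : ENNReal)⁻¹ • Measure.map (fun t : ℝ => -t) μ

lemma ae_mem_Icc {K : ℝ} {μ : Measure ℝ} (hsupp : μ (Set.Icc (-K) K)ᶜ = 0) :
    ∀ᵐ t ∂μ, t ∈ Set.Icc (-K) K := by
  rw [MeasureTheory.ae_iff]
  exact hsupp

lemma integ_bdd {μ : Measure ℝ} [IsFiniteMeasure μ] {f : ℝ → ℝ}
    (hf : AEStronglyMeasurable f μ) {C : ℝ} (h : ∀ᵐ t ∂μ, |f t| ≤ C) :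
    Integrable f μ :=
  (integrable_const C).mono' hf (h.mono fun t ht => by simpa using ht)

lemma Mfun_integrable {K : ℝ} (hK : 0 < K) {μ : Measure ℝ} [IsProbabilityMeasure μ]
    (hsupp : μ (Set.Icc (-K) K)ᶜ = 0) {x : ℝ} (h0 : 0 ≤ x) (h2 : x < (K ^ 2)⁻¹) :
    Integrable (fun t => t ^ 2 * x / (1 - t ^ 2 * x)) μ := by
  have hK2 : (0 : ℝ) < K ^ 2 := by positivity
  have hKx : K ^ 2 * x < 1 := by
    have := mul_lt_mul_of_pos_left h2 hK2
    rwa [mul_inv_cancel₀ hK2.ne'] at this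
  have hms : Measurable fun t : ℝ => t ^ 2 * x / (1 - t ^ 2 * x) :=
    ((measurable_id.pow_const 2).mul_const x).div
      (measurable_const.sub ((measurable_id.pow_const 2).mul_const x))
  refine integ_bdd hms.aestronglyMeasurable (C := 1 / (1 - K ^ 2 * x)) ?_
  filter_upwards [ae_mem_Icc hsupp] with t ht
  have ht2 : t ^ 2 ≤ K ^ 2 := sq_le_sq' (by linarith [ht.1]) ht.2
  have htx : t ^ 2 * x ≤ K ^ 2 * x := mul_le_mul_of_nonneg_right ht2 h0
  have htx0 : 0 ≤ t ^ 2 * x := by positivity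
  have hd : 0 < 1 - K ^ 2 * x := by linarith
  rw [abs_of_nonneg (div_nonneg htx0 (by linarith))]
  exact div_le_div₀ (by norm_num) (by linarith) hd (by linarith)

lemma Mfun_nonneg {K : ℝ} (hK : 0 < K) {μ : Measure ℝ} [IsProbabilityMeasure μ]
    (hsupp : μ (Set.Icc (-K) K)ᶜ = 0) {x : ℝ} (h0 : 0 ≤ x) (h2 : x < (K ^ 2)⁻¹) :
    0 ≤ Mfun μ x := by
  have hK2 : (0 : ℝ) < K ^ 2 := by positivity
  have hKx : K ^ 2 * x < 1 := by
    have := mul_lt_mul_of_pos_left h2 hK2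
    rwa [mul_inv_cancel₀ hK2.ne'] at this
  refine integral_nonneg_of_ae ?_
  filter_upwards [ae_mem_Icc hsupp] with t ht
  have ht2 : t ^ 2 ≤ K ^ 2 := sq_le_sq' (by linarith [ht.1]) ht.2
  have htx : t ^ 2 * x ≤ K ^ 2 * x := mul_le_mul_of_nonneg_right ht2 h0
  exact div_nonneg (by positivity) (by linarith)

lemma Mfun_mono {K : ℝ} (hK : 0 < K) {μ : Measure ℝ} [IsProbabilityMeasure μ]
    (hsupp : μ (Set.Icc (-K) K)ᶜ = 0) {x₁ x₂ : ℝ} (h0 : 0 ≤ x₁) (h12 : x₁ ≤ x₂)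
    (h2 : x₂ < (K ^ 2)⁻¹) : Mfun μ x₁ ≤ Mfun μ x₂ := by
  have hK2 : (0 : ℝ) < K ^ 2 := by positivity
  have hKx : K ^ 2 * x₂ < 1 := by
    have := mul_lt_mul_of_pos_left h2 hK2
    rwa [mul_inv_cancel₀ hK2.ne'] at this
  refine integral_mono_ae (Mfun_integrable hK hsupp h0 (lt_of_le_of_lt h12 h2))
    (Mfun_integrable hK hsupp (le_trans h0 h12) h2) ?_
  filter_upwards [ae_mem_Icc hsupp] with t ht
  have ht2 : t ^ 2 ≤ K ^ 2 := sq_le_sq' (by linarith [ht.1]) ht.2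
  have hd2 : 0 < 1 - t ^ 2 * x₂ := by nlinarith [mul_le_mul_of_nonneg_right ht2 (le_trans h0 h12)]
  have hd1 : 0 < 1 - t ^ 2 * x₁ := by nlinarith [mul_nonneg (sub_nonneg.mpr h12) (sq_nonneg t)]
  rw [div_le_div_iff₀ hd1 hd2]
  nlinarith [mul_nonneg (sub_nonneg.mpr h12) (sq_nonneg t)]

lemma Hfun_strictMono {K : ℝ} (hK : 0 < K) {μ : Measure ℝ} [IsProbabilityMeasure μ]
    (hsupp : μ (Set.Icc (-K) K)ᶜ = 0) {x₁ x₂ : ℝ} (h0 : 0 ≤ x₁) (h12 : x₁ < x₂)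
    (h2 : x₂ < (K ^ 2)⁻¹) : Hfun 1 μ x₁ < Hfun 1 μ x₂ := by
  have hm1 : 0 ≤ Mfun μ x₁ := Mfun_nonneg hK hsupp h0 (lt_trans h12 h2)
  have hm12 : Mfun μ x₁ ≤ Mfun μ x₂ := Mfun_mono hK hsupp h0 h12.le h2
  unfold Hfun Tfun
  have h1 : (1 * Mfun μ x₁ + 1) * (Mfun μ x₁ + 1) ≤ (1 * Mfun μ x₂ + 1) * (Mfun μ x₂ + 1) := by
    nlinarith
  have h2 : 0 < (1 * Mfun μ x₂ + 1) * (Mfun μ x₂ + 1) := by nlinarith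
  calc x₁ * ((1 * Mfun μ x₁ + 1) * (Mfun μ x₁ + 1))
      ≤ x₁ * ((1 * Mfun μ x₂ + 1) * (Mfun μ x₂ + 1)) := mul_le_mul_of_nonneg_left h1 h0
    _ < x₂ * ((1 * Mfun μ x₂ + 1) * (Mfun μ x₂ + 1)) := (mul_lt_mul_iff_left₀ h2).mpr h12

/-- For `μ` a probability measure supported in `[-K,K]` and `z` in a
neighborhood of `0`, `C^{(1)}_μ(z²) = z R_{μ_s}(z)`, where `μ_s` is the
symmetrization of `μ` and `R_ν(z) = G_ν⁻¹(z) - 1/z` is the (analytic) R-transform,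
`G_ν(w) = ∫ (w - t)⁻¹ dν(t)` being the Cauchy transform and `Ginv` its local
inverse near `0` (characterized by `G_{μ_s}(Ginv z) = z` with `|Ginv z| > K`).
Here `C^{(1)}_μ(z²)` is expressed as the γ satisfying `T^{(1)}(γ) = z²/x`,
`γ ≥ -1`, with `H^{(1)}_μ(x) = z²`, `x ∈ [0, K⁻²)`. -/
theorem stmt14 (K : ℝ) (hK : 0 < K) (μ : Measure ℝ) [IsProbabilityMeasure μ]
    (hsupp : μ (Set.Icc (-K) K)ᶜ = 0)
    (Ginv : ℝ → ℝ) (δ : ℝ) (hδ : 0 < δ)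
    (hGinv : ∀ z : ℝ, 0 < |z| → |z| < δ →
      K < |Ginv z| ∧ (∫ t, (Ginv z - t)⁻¹ ∂(symmetrization μ)) = z) :
    ∃ ε > 0, ∀ z : ℝ, 0 < |z| → |z| < ε →
      ∀ x ∈ Set.Ico (0 : ℝ) (K ^ 2)⁻¹, Hfun 1 μ x = z ^ 2 →
        ∀ γ : ℝ, -1 ≤ γ → Tfun 1 γ = z ^ 2 / x →
          γ = z * (Ginv z - 1 / z) := by
  refine ⟨δ, hδ, fun z hz0 hzδ x hx hH γ hγ hT => ?_⟩
  obtain ⟨hwK, hG⟩ := hGinv z hz0 hzδ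
  set w := Ginv z with hwdef
  have hz : z ≠ 0 := abs_pos.mp hz0
  have hK2 : (0 : ℝ) < K ^ 2 := by positivity
  have hw2 : K ^ 2 < w ^ 2 := by
    have h1 : K ^ 2 < |w| ^ 2 := by nlinarith [abs_nonneg w]
    simpa [sq_abs] using h1
  have hw2pos : (0 : ℝ) < w ^ 2 := lt_trans hK2 hw2
  have hw0 : w ≠ 0 := by
    intro h
    rw [h] at hwK
    simp at hwK
    linarith
  have hmem := ae_mem_Icc (K := K) (μ := μ) hsupp
  have hb : 0 < |w| - K := by linarith
  have hms1 : Measurable fun t : ℝ => (w - t)⁻¹ := by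
    exact (measurable_const.sub measurable_id).inv
  -- integrability facts
  have hint1 : Integrable (fun t => (w - t)⁻¹) μ := by
    refine integ_bdd ((measurable_const.sub measurable_id).inv).aestronglyMeasurable
      (C := (|w| - K)⁻¹) ?_
    filter_upwards [hmem] with t ht
    have h1 : |t| ≤ K := abs_le.mpr ht
    have h2 : |w| - K ≤ |w - t| := by
      have := abs_sub_abs_le_abs_sub w t
      linarith
    rw [abs_inv]
    exact inv_anti₀ hb h2
  have hint2 : Integrable (fun t => (w + t)⁻¹) μ := by
    refine integ_bdd ((measurable_const.add measurable_id).inv).aestronglyMeasurable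
      (C := (|w| - K)⁻¹) ?_
    filter_upwards [hmem] with t ht
    have h1 : |t| ≤ K := abs_le.mpr ht
    have h2 : |w| - K ≤ |w + t| := by
      have h3 : |w| ≤ |w + t| + |t| := by
        calc |w| = |(w + t) + (-t)| := by ring_nf
        _ ≤ |w + t| + |(-t)| := abs_add_le _ _
        _ = |w + t| + |t| := by rw [abs_neg]
      linarith
    rw [abs_inv]
    exact inv_anti₀ hb h2
  have hint3 : Integrable (fun t => w / (w ^ 2 - t ^ 2)) μ := by
    refine integ_bdd (measurable_const.div
      (measurable_const.sub (measurable_id.pow_const 2))).aestronglyMeasurable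
      (C := |w| / (w ^ 2 - K ^ 2)) ?_
    filter_upwards [hmem] with t ht
    have ht2 : t ^ 2 ≤ K ^ 2 := sq_le_sq' (by linarith [ht.1]) ht.2
    have h3 : 0 < w ^ 2 - t ^ 2 := by linarith
    rw [abs_div, abs_of_pos h3]
    exact div_le_div₀ (abs_nonneg w) le_rfl (by linarith) (by linarith)
  have hmap : Integrable (fun t => (w - t)⁻¹) (Measure.map (fun t : ℝ => -t) μ) := by
    rw [integrable_map_measure hms1.aestronglyMeasurable measurable_neg.aemeasurable]
    have hc : ((fun t => (w - t)⁻¹) ∘ Neg.neg) = fun t : ℝ => (w + t)⁻¹ := by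
      funext t; simp [Function.comp, sub_neg_eq_add]
    rw [hc]
    exact hint2
  -- expressing the Cauchy transform of the symmetrization
  have hsym : (∫ t, (w - t)⁻¹ ∂(symmetrization μ))
      = 2⁻¹ * (∫ t, (w - t)⁻¹ ∂μ) + 2⁻¹ * (∫ t, (w + t)⁻¹ ∂μ) := by
    rw [symmetrization,
      integral_add_measure (hint1.smul_measure (by simp)) (hmap.smul_measure (by simp)),
      integral_smul_measure, integral_smul_measure,
      integral_map measurable_neg.aemeasurable hms1.aestronglyMeasurable]
    simp [smul_eq_mul, sub_neg_eq_add]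
  have hzint : (∫ t, w / (w ^ 2 - t ^ 2) ∂μ) = z := by
    have e : ∫ t, w / (w ^ 2 - t ^ 2) ∂μ
        = ∫ t, (2⁻¹ * (w - t)⁻¹ + 2⁻¹ * (w + t)⁻¹) ∂μ := by
      refine integral_congr_ae (hmem.mono fun t ht => ?_)
      have h1 : |t| ≤ K := abs_le.mpr ht
      have ht2 : t ^ 2 ≤ K ^ 2 := sq_le_sq' (by linarith [ht.1]) ht.2
      have h3 : 0 < w ^ 2 - t ^ 2 := by linarith
      have h4 : w - t ≠ 0 := by
        intro h
        have : w = t := by linarith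
        rw [this] at hwK
        linarith
      have h5 : w + t ≠ 0 := by
        intro h
        have : w = -t := by linarith
        rw [this] at hwK
        rw [abs_neg] at hwK
        linarith
      field_simp
      ring
    rw [e, integral_add (hint1.const_mul _) (hint2.const_mul _),
      integral_const_mul, integral_const_mul, ← hsym, hG]
  -- value of Mfun at (w^2)⁻¹
  have hM : Mfun μ (w ^ 2)⁻¹ = w * z - 1 := by
    have e1 : Mfun μ (w ^ 2)⁻¹ = ∫ t, (w * (w / (w ^ 2 - t ^ 2)) - 1) ∂μ := by
      refine integral_congr_ae (hmem.mono fun t ht => ?_)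
      have ht2 : t ^ 2 ≤ K ^ 2 := sq_le_sq' (by linarith [ht.1]) ht.2
      have h3 : 0 < w ^ 2 - t ^ 2 := by linarith
      field_simp
      ring
    rw [e1, integral_sub (hint3.const_mul w) (integrable_const 1),
      integral_const_mul, hzint]
    simp [measure_univ]
  have hx0 : (0 : ℝ) ≤ (w ^ 2)⁻¹ := by positivity
  have hx0' : (w ^ 2)⁻¹ < (K ^ 2)⁻¹ := by
    rw [inv_lt_inv₀ hw2pos hK2]
    exact hw2
  have hwz : 1 ≤ w * z := by
    have := Mfun_nonneg hK hsupp hx0 hx0'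
    rw [hM] at this
    linarith
  have hHx0 : Hfun 1 μ (w ^ 2)⁻¹ = z ^ 2 := by
    unfold Hfun Tfun
    rw [hM]
    field_simp
    ring
  -- injectivity of Hfun forces x = (w^2)⁻¹
  have hxx0 : x = (w ^ 2)⁻¹ := by
    rcases lt_trichotomy x ((w ^ 2)⁻¹) with h | h | h
    · exfalso
      have := Hfun_strictMono hK hsupp hx.1 h hx0'
      rw [hH, hHx0] at this
      exact lt_irrefl _ this
    · exact h
    · exfalso
      have := Hfun_strictMono hK hsupp hx0 h hx.2
      rw [hH, hHx0] at this
      exact lt_irrefl _ this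
  -- conclude
  have hT' : Tfun 1 γ = z ^ 2 * w ^ 2 := by
    rw [hT, hxx0]
    field_simp
  have e : (γ + 1 - w * z) * (γ + 1 + w * z) = 0 := by
    unfold Tfun at hT'
    linear_combination hT'
  rcases mul_eq_zero.mp e with h | h
  · have hγ1 : γ = w * z - 1 := by linarith
    rw [hγ1]
    field_simp
  · exfalso
    linarith
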